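/- If T₁ and T₂ are two-sided tilting complexes over a K-algebra A, then T₁ ⊗^L_A T₂ is also a two-sided tilting complex over A. Consequently, isomorphism classes of two-sided tilting complexes over A form a group (the derived Picard group) under derived tensor product, with identity the class of A. -/

import Mathlib

open CategoryTheory MonoidalCategory

/-- A two-sided tilting complex, formulated in a monoidal category `𝒟` standing for the
derived category `D(Mod A^e)` of bimodules over a `K`-algebra `A`, equipped with the
derived tensor product `⊗^L_A` (with unit the bimodule `A`): an object `T` admitting a
quasi-inverse `T^∨` with `T ⊗^L_A T^∨ ≅ A` and `T^∨ ⊗^L_A T ≅ A`. -/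
def IsTwoSidedTilting {𝒟 : Type*} [Category 𝒟] [MonoidalCategory 𝒟] (T : 𝒟) : Prop :=
  ∃ T' : 𝒟, Nonempty (T ⊗ T' ≅ 𝟙_ 𝒟) ∧ Nonempty (T' ⊗ T ≅ 𝟙_ 𝒟)

/-- The set of isomorphism classes of two-sided tilting complexes: the underlying set of
the derived Picard group `DPic(A)`. -/
def TiltingClass (𝒟 : Type*) [Category 𝒟] [MonoidalCategory 𝒟] : Type _ :=
  Quotient (isIsomorphicSetoid (ObjectProperty.FullSubcategory (fun T : 𝒟 => IsTwoSidedTilting T)))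

/-- The isomorphism class of a two-sided tilting complex. -/
def TiltingClass.mk {𝒟 : Type*} [Category 𝒟] [MonoidalCategory 𝒟] (T : 𝒟)
    (hT : IsTwoSidedTilting T) : TiltingClass 𝒟 :=
  Quotient.mk (isIsomorphicSetoid (ObjectProperty.FullSubcategory (fun T : 𝒟 => IsTwoSidedTilting T)))
    ⟨T, hT⟩

section DPicAux

attribute [local instance] CategoryTheory.isIsomorphicSetoid

variable {𝒟 : Type*} [Category 𝒟] [MonoidalCategory 𝒟]

/-- The tensor product of two-sided tilting complexes is two-sided tilting. -/
lemma DPicAux.tensor_tilting {T₁ T₂ : 𝒟} (h₁ : IsTwoSidedTilting T₁)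
    (h₂ : IsTwoSidedTilting T₂) : IsTwoSidedTilting (T₁ ⊗ T₂) := by
  obtain ⟨S₁, ⟨e₁⟩, ⟨f₁⟩⟩ := h₁
  obtain ⟨S₂, ⟨e₂⟩, ⟨f₂⟩⟩ := h₂
  refine ⟨S₂ ⊗ S₁, ⟨?_⟩, ⟨?_⟩⟩
  · calc (T₁ ⊗ T₂) ⊗ (S₂ ⊗ S₁)
        ≅ T₁ ⊗ (T₂ ⊗ (S₂ ⊗ S₁)) := α_ _ _ _
      _ ≅ T₁ ⊗ ((T₂ ⊗ S₂) ⊗ S₁) := whiskerLeftIso T₁ (α_ _ _ _).symm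
      _ ≅ T₁ ⊗ (𝟙_ 𝒟 ⊗ S₁) := whiskerLeftIso T₁ (whiskerRightIso e₂ S₁)
      _ ≅ T₁ ⊗ S₁ := whiskerLeftIso T₁ (λ_ S₁)
      _ ≅ 𝟙_ 𝒟 := e₁
  · calc (S₂ ⊗ S₁) ⊗ (T₁ ⊗ T₂)
        ≅ S₂ ⊗ (S₁ ⊗ (T₁ ⊗ T₂)) := α_ _ _ _
      _ ≅ S₂ ⊗ ((S₁ ⊗ T₁) ⊗ T₂) := whiskerLeftIso S₂ (α_ _ _ _).symm
      _ ≅ S₂ ⊗ (𝟙_ 𝒟 ⊗ T₂) := whiskerLeftIso S₂ (whiskerRightIso f₁ T₂)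
      _ ≅ S₂ ⊗ T₂ := whiskerLeftIso S₂ (λ_ T₂)
      _ ≅ 𝟙_ 𝒟 := f₂

/-- Uniqueness of the quasi-inverse up to isomorphism. -/
noncomputable def DPicAux.dualIso {T T' S S' : 𝒟} (i : T ≅ T')
    (f : S ⊗ T ≅ 𝟙_ 𝒟) (e' : T' ⊗ S' ≅ 𝟙_ 𝒟) : S ≅ S' :=
  calc S ≅ S ⊗ 𝟙_ 𝒟 := (ρ_ S).symm
    _ ≅ S ⊗ (T' ⊗ S') := whiskerLeftIso S e'.symm
    _ ≅ S ⊗ (T ⊗ S') := whiskerLeftIso S (whiskerRightIso i.symm S')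
    _ ≅ (S ⊗ T) ⊗ S' := (α_ _ _ _).symm
    _ ≅ 𝟙_ 𝒟 ⊗ S' := whiskerRightIso f S'
    _ ≅ S' := λ_ S'

abbrev DPicAux.Obj (𝒟 : Type*) [Category 𝒟] [MonoidalCategory 𝒟] :=
  ObjectProperty.FullSubcategory (fun T : 𝒟 => IsTwoSidedTilting T)

/-- An iso of underlying objects gives an iso in the full subcategory. -/
def DPicAux.mkIso {X Y : DPicAux.Obj 𝒟} (i : X.1 ≅ Y.1) : X ≅ Y :=
  InducedCategory.isoMk i

open DPicAux in
/-- The chosen quasi-inverse of a tilting object, as a tilting object. -/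
noncomputable def DPicAux.dual (X : DPicAux.Obj 𝒟) : DPicAux.Obj 𝒟 :=
  ⟨X.2.choose, X.1, ⟨(X.2.choose_spec.2).some⟩, ⟨(X.2.choose_spec.1).some⟩⟩

open DPicAux in
noncomputable def DPicAux.group : Group (TiltingClass 𝒟) where
  mul := Quotient.map₂ (fun X Y => ⟨X.1 ⊗ Y.1, tensor_tilting X.2 Y.2⟩)
    (fun _ _ ⟨i⟩ _ _ ⟨j⟩ => ⟨mkIso (tensorIso ((ObjectProperty.ι _).mapIso i)
      ((ObjectProperty.ι _).mapIso j))⟩)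
  one := TiltingClass.mk (𝟙_ 𝒟) ⟨𝟙_ 𝒟, ⟨λ_ _⟩, ⟨λ_ _⟩⟩
  inv := Quotient.map (fun X => dual X)
    (fun X Y ⟨i⟩ => ⟨mkIso (dualIso ((ObjectProperty.ι _).mapIso i)
      (X.2.choose_spec.2).some (Y.2.choose_spec.1).some)⟩)
  mul_assoc := by
    rintro ⟨X⟩ ⟨Y⟩ ⟨Z⟩
    exact Quotient.sound ⟨mkIso (α_ X.1 Y.1 Z.1)⟩
  one_mul := by
    rintro ⟨X⟩
    exact Quotient.sound ⟨mkIso (λ_ X.1)⟩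
  mul_one := by
    rintro ⟨X⟩
    exact Quotient.sound ⟨mkIso (ρ_ X.1)⟩
  inv_mul_cancel := by
    rintro ⟨X⟩
    exact Quotient.sound ⟨mkIso (X.2.choose_spec.2).some⟩

end DPicAux

/-- If `T₁` and `T₂` are two-sided tilting complexes over `A`, then so is
`T₁ ⊗^L_A T₂`; consequently the isomorphism classes of two-sided tilting complexes form
a group (the derived Picard group) under derived tensor product, with identity the
class of `A`. -/
theorem tensor_of_tilting_is_tilting_and_derived_Picard_group
    (𝒟 : Type*) [Category 𝒟] [MonoidalCategory 𝒟] :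
    (∀ T₁ T₂ : 𝒟, IsTwoSidedTilting T₁ → IsTwoSidedTilting T₂ →
      IsTwoSidedTilting (T₁ ⊗ T₂)) ∧
    ∃ _ : Group (TiltingClass 𝒟),
      (∀ (T₁ T₂ : 𝒟) (h₁ : IsTwoSidedTilting T₁) (h₂ : IsTwoSidedTilting T₂)
        (h₁₂ : IsTwoSidedTilting (T₁ ⊗ T₂)),
          TiltingClass.mk T₁ h₁ * TiltingClass.mk T₂ h₂ =
            TiltingClass.mk (T₁ ⊗ T₂) h₁₂) ∧
      (∀ h : IsTwoSidedTilting (𝟙_ 𝒟),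
        (1 : TiltingClass 𝒟) = TiltingClass.mk (𝟙_ 𝒟) h) := by
  refine ⟨fun _ _ => DPicAux.tensor_tilting, DPicAux.group, fun T₁ T₂ h₁ h₂ h₁₂ => ?_,
    fun h => ?_⟩
  · exact Quotient.sound ⟨DPicAux.mkIso (Iso.refl _)⟩
  · exact Quotient.sound ⟨DPicAux.mkIso (Iso.refl _)⟩
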